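/- arXiv:math/9709209 — 2 statements merged into one kernel-verified Lean document; each statement's English description precedes it below -/
import Mathlib

section
/- Let T be a compact operator on H and let α ∈ ℂ with |α| ≤ 1. Then |α χ(T) − χ(α T)| ≤ ν(T). -/
noncomputable section

open Set Filter ComplexInnerProductSpace

variable {E : Type*} [NormedAddCommGroup E] [InnerProductSpace ℂ E] [CompleteSpace E]

/-- The algebraic multiplicity of `z` as an eigenvalue of `T`: the dimension of the
generalized eigenspace `⋃_k ker (T - z)^k`. -/
noncomputable def algMult (T : E →L[ℂ] E) (z : ℂ) : ℕ :=
  Module.finrank ℂ ↥(⨆ k : ℕ, LinearMap.ker (((T - z • (1 : E →L[ℂ] E)) ^ k : E →L[ℂ] E) : E →ₗ[ℂ] E))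

/-- `l` is an eigenvalue sequence for `T`: the eigenvalues of `T` repeated according to
algebraic multiplicity, arranged with `‖l n‖` nonincreasing, extended by zeros. -/
def IsEigenvalueSeq (T : E →L[ℂ] E) (l : ℕ → ℂ) : Prop :=
  Antitone (fun n => ‖l n‖) ∧
  ∀ z : ℂ, z ≠ 0 → ({n | l n = z}.Finite ∧ {n | l n = z}.ncard = algMult T z)

/-- `s` is the singular value sequence of `T`: the eigenvalue sequence of `|T| = (T^*T)^{1/2}`. -/
def IsSingularValueSeq (T : E →L[ℂ] E) (s : ℕ → ℝ) : Prop :=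
  (∀ n, 0 ≤ s n) ∧
  ∃ A : E →L[ℂ] E, A.IsPositive ∧ A * A = ContinuousLinearMap.adjoint T * T ∧
    IsEigenvalueSeq A (fun n => (s n : ℂ))

/-- ν: the number of terms of the sequence of absolute value at least 1. -/
noncomputable def nuSeq (l : ℕ → ℂ) : ℕ := {n | 1 ≤ ‖l n‖}.ncard

/-- μ: the sum of `log₊` of the absolute values. -/
noncomputable def muSeq (l : ℕ → ℂ) : ℝ := ∑' n, max (Real.log ‖l n‖) 0

/-- μ for a real (singular value) sequence. -/
noncomputable def muSeqR (s : ℕ → ℝ) : ℝ := ∑' n, max (Real.log (s n)) 0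

/-- χ: the sum of the terms of absolute value at least 1. -/
noncomputable def chiSeq (l : ℕ → ℂ) : ℂ := ∑' n, if 1 ≤ ‖l n‖ then l n else 0

set_option linter.unusedSectionVars false

lemma exists_eigenvector (T : E →L[ℂ] E) (z : ℂ) (h : algMult T z ≠ 0) :
    ∃ v : E, v ≠ 0 ∧ T v = z • v := by
  set A := T - z • (1 : E →L[ℂ] E) with hA
  have hsup : (⨆ k : ℕ, LinearMap.ker ((A ^ k : E →L[ℂ] E) : E →ₗ[ℂ] E)) ≠ ⊥ := by
    intro hbot
    apply h
    rw [algMult, ← hA, hbot, finrank_bot]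
  obtain ⟨x, hx, hx0⟩ := Submodule.ne_bot_iff _ |>.mp hsup
  have hmono : Monotone fun k : ℕ => LinearMap.ker ((A ^ k : E →L[ℂ] E) : E →ₗ[ℂ] E) := by
    apply monotone_nat_of_le_succ
    intro k y hy
    rw [LinearMap.mem_ker, ContinuousLinearMap.coe_coe] at hy ⊢
    rw [pow_succ', ContinuousLinearMap.mul_apply, hy, map_zero]
  rw [Submodule.mem_iSup_of_directed _ hmono.directed_le] at hx
  have hex : ∃ k, (A ^ k) x = 0 := by
    obtain ⟨k, hk⟩ := hx
    exact ⟨k, LinearMap.mem_ker.mp hk⟩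
  classical
  set k := Nat.find hex with hkdef
  have hk : (A ^ k) x = 0 := Nat.find_spec hex
  have hkpos : k ≠ 0 := by
    intro h0
    rw [h0, pow_zero] at hk
    exact hx0 hk
  obtain ⟨j, hkj⟩ := Nat.exists_eq_succ_of_ne_zero hkpos
  have hj : (A ^ j) x ≠ 0 := by
    have := Nat.find_min hex (m := j) (by omega)
    simpa using this
  refine ⟨(A ^ j) x, hj, ?_⟩
  have : A ((A ^ j) x) = 0 := by
    rw [← ContinuousLinearMap.mul_apply, ← pow_succ']
    rw [hkj] at hk
    exact hk
  rw [hA] at this ⊢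
  simpa [sub_eq_zero] using this

lemma finite_ge_one (T : E →L[ℂ] E) (hT : IsCompactOperator ⇑T)
    (l : ℕ → ℂ) (hl : IsEigenvalueSeq T l) : {n | 1 ≤ ‖l n‖}.Finite := by
  by_contra hS
  rw [← Set.not_infinite, not_not] at hS
  have hall : ∀ n, 1 ≤ ‖l n‖ := by
    intro n
    obtain ⟨m, hm, hnm⟩ := hS.exists_gt n
    exact le_trans hm (hl.1 hnm.le)
  have hne : ∀ z ∈ Set.range l, z ≠ 0 := by
    rintro z ⟨n, rfl⟩ h0
    have := hall n
    rw [h0, norm_zero] at this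
    linarith
  have hrange : (Set.range l).Infinite := by
    intro hfin
    have hfinU : (⋃ z ∈ Set.range l, {n | l n = z}).Finite :=
      hfin.biUnion (fun z hz => (hl.2 z (hne z hz)).1)
    have : (Set.univ : Set ℕ).Finite := by
      refine hfinU.subset ?_
      intro n _
      simp only [Set.mem_iUnion]
      exact ⟨l n, Set.mem_range_self n, rfl⟩
    exact Set.infinite_univ this
  classical
  set emb := hrange.natEmbedding with hemb
  set μ : ℕ → ℂ := fun i => (emb i : ℂ) with hμ
  have hμinj : Function.Injective μ := fun i j h =>
    emb.injective (Subtype.ext h)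
  have hμ1 : ∀ i, 1 ≤ ‖μ i‖ := by
    intro i
    obtain ⟨n, hn⟩ := (emb i).2
    rw [hμ]; simp only []
    rw [← hn]; exact hall n
  have hμ0 : ∀ i, μ i ≠ 0 := by
    intro i h0
    have := hμ1 i
    rw [h0, norm_zero] at this; linarith
  have halg : ∀ i, algMult T (μ i) ≠ 0 := by
    intro i
    obtain ⟨n, hn⟩ := (emb i).2
    have hfib := hl.2 (μ i) (hμ0 i)
    rw [← hfib.2]
    have : ({n | l n = μ i}).Nonempty := ⟨n, hn⟩
    exact (Set.ncard_pos hfib.1 |>.mpr this).ne'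
  have hev := fun i => exists_eigenvector T (μ i) (halg i)
  choose v hv0 hveq using hev
  have hli : LinearIndependent ℂ v := by
    refine Module.End.eigenvectors_linearIndependent' (T : E →ₗ[ℂ] E) μ hμinj v ?_
    intro i
    refine ⟨(Module.End.mem_eigenspace_iff).mpr ?_, hv0 i⟩
    simpa using hveq i
  set W : ℕ → Submodule ℂ E := fun n => Submodule.span ℂ (v '' Set.Iio n) with hW
  haveI hWfd : ∀ n, FiniteDimensional ℂ (W n) := fun n =>
    FiniteDimensional.span_of_finite ℂ ((Set.finite_Iio n).image v)
  have hWmono : Monotone W := fun m n hmn =>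
    Submodule.span_mono (Set.image_mono (Set.Iio_subset_Iio hmn))
  have hvW : ∀ n, v n ∈ W (n + 1) :=
    fun n => Submodule.subset_span ⟨n, by simp, rfl⟩
  have hvnot : ∀ n, v n ∉ W n := fun n =>
    hli.notMem_span_image (by simp)
  have hu : ∀ n, ∃ u : E, ‖u‖ = 1 ∧ u ∈ W (n + 1) ∧ u ∈ (W n)ᗮ := by
    intro n
    haveI : CompleteSpace (W n) := FiniteDimensional.complete ℂ _
    set q := v n - (Submodule.orthogonalProjection (W n) (v n) : E) with hq
    have hqO : q ∈ (W n)ᗮ := Submodule.sub_starProjection_mem_orthogonal (K := W n) (v n)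
    have hq0 : q ≠ 0 := by
      intro h0
      apply hvnot n
      rw [sub_eq_zero] at h0
      rw [h0]
      exact Submodule.coe_mem _
    have hqW : q ∈ W (n + 1) := by
      refine Submodule.sub_mem _ (hvW n) ?_
      exact hWmono (Nat.le_succ n) (Submodule.coe_mem _)
    refine ⟨‖q‖⁻¹ • q, ?_, Submodule.smul_mem _ _ hqW, Submodule.smul_mem _ _ hqO⟩
    rw [norm_smul, norm_inv, norm_norm]
    exact inv_mul_cancel₀ (norm_ne_zero_iff.mpr hq0)
  choose u hu1 huW huO using hu
  have Tmap : ∀ n, ∀ x ∈ W (n + 1), T x - μ n • x ∈ W n := by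
    intro n
    set Bn : E →ₗ[ℂ] E := (T : E →ₗ[ℂ] E) - μ n • LinearMap.id with hBn
    have hle : W (n + 1) ≤ Submodule.comap Bn (W n) := by
      rw [hW]
      refine Submodule.span_le.mpr ?_
      rintro _ ⟨i, hi, rfl⟩
      simp only [Set.mem_Iio] at hi
      have hBnvi : Bn (v i) = (μ i - μ n) • v i := by
        simp [hBn, hveq i, sub_smul]
      rcases lt_or_eq_of_le (Nat.lt_succ_iff.mp hi) with h | h
      · simp only [SetLike.mem_coe, Submodule.mem_comap, hBnvi]
        exact Submodule.smul_mem _ _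
          (Submodule.subset_span (Set.mem_image_of_mem v h))
      · subst h
        simp only [SetLike.mem_coe, Submodule.mem_comap, hBnvi]
        simp
    intro x hx
    have := hle hx
    simpa [hBn] using this
  have key : ∀ m n, m < n → 1 ≤ ‖T (u n) - T (u m)‖ := by
    intro m n hmn
    have hun1 : T (u n) - μ n • u n ∈ W n := Tmap n (u n) (huW n)
    have hum : T (u m) ∈ W n := by
      have h1 : T (u m) - μ m • u m ∈ W m := Tmap m _ (huW m)
      have h2 : T (u m) = (T (u m) - μ m • u m) + μ m • u m := by abel
      rw [h2]
      exact Submodule.add_mem _ (hWmono hmn.le h1)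
        (Submodule.smul_mem _ _ (hWmono (Nat.succ_le_of_lt hmn) (huW m)))
    set c := (T (u n) - μ n • u n) - T (u m) with hc
    have hcW : c ∈ W n := Submodule.sub_mem _ hun1 hum
    have heq : T (u n) - T (u m) = c + μ n • u n := by rw [hc]; abel
    have hinner : ⟪c, μ n • u n⟫ = 0 := by
      have h0 : ⟪c, u n⟫ = 0 := (Submodule.mem_orthogonal _ _).mp (huO n) c hcW
      rw [inner_smul_right, h0, mul_zero]
    have hpyth := norm_add_sq_eq_norm_sq_add_norm_sq_of_inner_eq_zero _ _ hinner
    have hnm : ‖μ n • u n‖ = ‖μ n‖ := by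
      rw [norm_smul, hu1 n, mul_one]
    rw [heq]
    have h1 : (1 : ℝ) ≤ ‖μ n‖ := hμ1 n
    nlinarith [norm_nonneg c, norm_nonneg (c + μ n • u n), hpyth, hnm]
  have hcomp : IsCompact (closure (⇑T '' Metric.closedBall 0 1)) :=
    hT.isCompact_closure_image_closedBall (𝕜₁ := ℂ) 1
  have hmem : ∀ n, T (u n) ∈ closure (⇑T '' Metric.closedBall 0 1) := by
    intro n
    exact subset_closure ⟨u n, by simp [Metric.mem_closedBall, hu1 n], rfl⟩
  obtain ⟨a, -, φ, hφ, hconv⟩ := hcomp.tendsto_subseq hmem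
  rw [Metric.tendsto_atTop] at hconv
  obtain ⟨N, hN⟩ := hconv (1/2) (by norm_num)
  have h1 := hN N le_rfl
  have h2 := hN (N + 1) (Nat.le_succ N)
  simp only [Function.comp_apply] at h1 h2
  have hd := key (φ N) (φ (N + 1)) (hφ (Nat.lt_succ_self N))
  rw [← dist_eq_norm] at hd
  have := dist_triangle (T (u (φ (N + 1)))) a (T (u (φ N)))
  rw [dist_comm a (T (u (φ N)))] at this
  linarith [hd, h1, h2, this]

lemma algMult_smul (T : E →L[ℂ] E) {α : ℂ} (hα : α ≠ 0) (z : ℂ) :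
    algMult (α • T) z = algMult T (α⁻¹ * z) := by
  have hB : α • T - z • (1 : E →L[ℂ] E) =
      α • (T - (α⁻¹ * z) • (1 : E →L[ℂ] E)) := by
    rw [smul_sub, smul_smul, mul_inv_cancel_left₀ hα]
  have hker : ∀ k : ℕ, LinearMap.ker (((α • T - z • (1 : E →L[ℂ] E)) ^ k : E →L[ℂ] E) : E →ₗ[ℂ] E) =
      LinearMap.ker (((T - (α⁻¹ * z) • (1 : E →L[ℂ] E)) ^ k : E →L[ℂ] E) : E →ₗ[ℂ] E) := by
    intro k
    rw [hB, smul_pow]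
    ext x
    simp only [LinearMap.mem_ker, ContinuousLinearMap.coe_coe, ContinuousLinearMap.smul_apply, smul_eq_zero]
    constructor
    · rintro (h | h)
      · exact absurd h (pow_ne_zero k hα)
      · exact h
    · exact Or.inr
  unfold algMult
  rw [iSup_congr hker]

lemma algMult_zero_op {z : ℂ} (hz : z ≠ 0) : algMult (0 : E →L[ℂ] E) z = 0 := by
  have hker : ∀ k : ℕ, LinearMap.ker ((((0 : E →L[ℂ] E) - z • 1) ^ k : E →L[ℂ] E) : E →ₗ[ℂ] E) = ⊥ := by
    intro k
    have h0 : (0 : E →L[ℂ] E) - z • 1 = (-z) • (1 : E →L[ℂ] E) := by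
      rw [zero_sub, neg_smul]
    rw [h0, smul_pow, one_pow]
    ext x
    simp only [LinearMap.mem_ker, ContinuousLinearMap.coe_coe, ContinuousLinearMap.smul_apply,
      ContinuousLinearMap.one_apply, smul_eq_zero, Submodule.mem_bot]
    constructor
    · rintro (h | h)
      · exact absurd h (pow_ne_zero k (neg_ne_zero.mpr hz))
      · exact h
    · exact Or.inr
  unfold algMult
  rw [iSup_eq_bot.mpr hker]
  exact finrank_bot ℂ E


lemma chiSeq_eq_sum (l : ℕ → ℂ) (hS : {n | 1 ≤ ‖l n‖}.Finite) :
    chiSeq l = ∑ n ∈ hS.toFinset, l n := by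
  rw [chiSeq, tsum_eq_sum (s := hS.toFinset)
    (by intro n hn; rw [if_neg]; simpa using hn)]
  refine Finset.sum_congr rfl (fun n hn => ?_)
  rw [if_pos]
  simpa using hn

open Classical in
lemma filter_fiber_card (l : ℕ → ℂ) (hS : {n | 1 ≤ ‖l n‖}.Finite) {z : ℂ} (hz : 1 ≤ ‖z‖) :
    (hS.toFinset.filter (fun n => l n = z)).card = {n | l n = z}.ncard := by
  have hset : ↑(hS.toFinset.filter (fun n => l n = z)) = {n | l n = z} := by
    ext n
    simp only [Finset.coe_filter, Set.Finite.mem_toFinset, Set.mem_setOf_eq]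
    constructor
    · rintro ⟨-, h⟩; exact h
    · intro h; exact ⟨by rw [h]; exact hz, h⟩
  rw [← hset, Set.ncard_coe_finset]

open Classical in
lemma chiSeq_grouped (l : ℕ → ℂ) (hS : {n | 1 ≤ ‖l n‖}.Finite) :
    chiSeq l = ∑ z ∈ hS.toFinset.image l, ({n | l n = z}.ncard : ℂ) * z := by
  rw [chiSeq_eq_sum l hS,
    ← Finset.sum_fiberwise_of_maps_to (fun n hn => Finset.mem_image_of_mem l hn) l]
  refine Finset.sum_congr rfl (fun z hz => ?_)
  obtain ⟨n₀, hn₀, rfl⟩ := Finset.mem_image.mp hz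
  have hz1 : 1 ≤ ‖l n₀‖ := by simpa using hn₀
  rw [← filter_fiber_card l hS hz1]
  rw [Finset.sum_congr rfl (fun n hn => (Finset.mem_filter.mp hn).2),
    Finset.sum_const, nsmul_eq_mul]

open Classical in
lemma nu_grouped (l : ℕ → ℂ) (hS : {n | 1 ≤ ‖l n‖}.Finite) :
    (nuSeq l : ℝ) = ∑ z ∈ hS.toFinset.image l, ({n | l n = z}.ncard : ℝ) := by
  have h1 : nuSeq l = hS.toFinset.card := by
    rw [nuSeq, ← Set.ncard_coe_finset, Set.Finite.coe_toFinset]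
  rw [h1, Finset.card_eq_sum_card_image l hS.toFinset]
  push_cast
  refine Finset.sum_congr rfl (fun z hz => ?_)
  obtain ⟨n₀, hn₀, rfl⟩ := Finset.mem_image.mp hz
  have hz1 : 1 ≤ ‖l n₀‖ := by simpa using hn₀
  rw [filter_fiber_card l hS hz1]

open Classical in
theorem chi_smul_le'
    (T : E →L[ℂ] E) (hT : IsCompactOperator ⇑T)
    (α : ℂ) (hα : ‖α‖ ≤ 1)
    (l : ℕ → ℂ) (hl : IsEigenvalueSeq T l)
    (lα : ℕ → ℂ) (hlα : IsEigenvalueSeq (α • T) lα) :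
    ‖α * chiSeq l - chiSeq lα‖ ≤ (nuSeq l : ℝ) := by
  have hS : {n | 1 ≤ ‖l n‖}.Finite := finite_ge_one T hT l hl
  by_cases hα0 : α = 0
  · subst hα0
    have hlz : ∀ n, lα n = 0 := by
      intro n
      by_contra h
      have hfib := hlα.2 (lα n) h
      have h0 : algMult ((0:ℂ) • T) (lα n) = 0 := by
        rw [zero_smul]; exact algMult_zero_op h
      have hne : {m | lα m = lα n}.ncard ≠ 0 :=
        (Set.ncard_pos hfib.1 |>.mpr ⟨n, rfl⟩).ne'
      rw [hfib.2, h0] at hne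
      exact hne rfl
    have hχα : chiSeq lα = 0 := by
      rw [chiSeq]
      convert tsum_zero with n
      rw [hlz n, if_neg]
      norm_num
    rw [hχα]
    simp
  have hTα : IsCompactOperator ⇑(α • T) := by
    have hcoe : ⇑(α • T) = α • ⇑T := rfl
    rw [hcoe]; exact hT.smul α
  have hSα : {n | 1 ≤ ‖lα n‖}.Finite := finite_ge_one (α • T) hTα lα hlα
  set V := hS.toFinset.image l with hV
  set V' := V.filter (fun w => 1 ≤ ‖α * w‖) with hV'
  have hVfact : ∀ z ∈ V, 1 ≤ ‖z‖ ∧ z ≠ 0 := by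
    intro z hz
    obtain ⟨n₀, hn₀, rfl⟩ := Finset.mem_image.mp hz
    have h1 : 1 ≤ ‖l n₀‖ := by simpa using hn₀
    have h0 : l n₀ ≠ 0 := by intro h; rw [h, norm_zero] at h1; linarith
    exact ⟨h1, h0⟩
  have hkey : ∀ w ∈ V', {m | lα m = α * w}.ncard = {m | l m = w}.ncard := by
    intro w hw
    rw [hV', Finset.mem_filter] at hw
    obtain ⟨h1, h0⟩ := hVfact w hw.1
    have hαw0 : α * w ≠ 0 := mul_ne_zero hα0 h0
    rw [(hlα.2 _ hαw0).2, algMult_smul T hα0, inv_mul_cancel_left₀ hα0,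
      (hl.2 _ h0).2]
  have hVα : hSα.toFinset.image lα = V'.image (fun w => α * w) := by
    ext z
    simp only [Finset.mem_image]
    constructor
    · rintro ⟨n, hn, rfl⟩
      have h1 : 1 ≤ ‖lα n‖ := by simpa using hn
      have h0 : lα n ≠ 0 := by intro h; rw [h, norm_zero] at h1; linarith
      have hw0 : α⁻¹ * lα n ≠ 0 := mul_ne_zero (inv_ne_zero hα0) h0
      have hmult : {m | l m = α⁻¹ * lα n}.ncard = {m | lα m = lα n}.ncard := by
        rw [(hlα.2 _ h0).2, algMult_smul T hα0, (hl.2 _ hw0).2]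
      have hpos : {m | l m = α⁻¹ * lα n}.ncard ≠ 0 := by
        rw [hmult]
        exact (Set.ncard_pos (hlα.2 _ h0).1 |>.mpr ⟨n, rfl⟩).ne'
      obtain ⟨m, hm⟩ := Set.nonempty_of_ncard_ne_zero hpos
      have hwnorm : 1 ≤ ‖α⁻¹ * lα n‖ := by
        calc (1:ℝ) ≤ ‖lα n‖ := h1
        _ = ‖α‖ * ‖α⁻¹ * lα n‖ := by rw [← norm_mul, mul_inv_cancel_left₀ hα0]
        _ ≤ 1 * ‖α⁻¹ * lα n‖ := mul_le_mul_of_nonneg_right hα (norm_nonneg _)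
        _ = ‖α⁻¹ * lα n‖ := one_mul _
      refine ⟨α⁻¹ * lα n, ?_, by rw [mul_inv_cancel_left₀ hα0]⟩
      rw [hV', Finset.mem_filter]
      refine ⟨?_, by rw [mul_inv_cancel_left₀ hα0]; exact h1⟩
      rw [hV]
      refine Finset.mem_image.mpr ⟨m, ?_, hm⟩
      rw [Set.Finite.mem_toFinset]
      show 1 ≤ ‖l m‖
      rw [hm]; exact hwnorm
    · rintro ⟨w, hw, rfl⟩
      have hwmem := hw
      rw [hV', Finset.mem_filter] at hwmem
      obtain ⟨h1, h0⟩ := hVfact w hwmem.1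
      have hpos : {m | lα m = α * w}.ncard ≠ 0 := by
        rw [hkey w hw]
        obtain ⟨n₀, hn₀, hln₀⟩ := Finset.mem_image.mp hwmem.1
        exact (Set.ncard_pos (hl.2 _ h0).1 |>.mpr ⟨n₀, hln₀⟩).ne'
      obtain ⟨m, hm⟩ := Set.nonempty_of_ncard_ne_zero hpos
      refine ⟨m, ?_, hm⟩
      rw [Set.Finite.mem_toFinset]
      show 1 ≤ ‖lα m‖
      rw [hm]; exact hwmem.2
  have hinj : Set.InjOn (fun w => α * w) V' := fun a _ b _ h =>
    mul_left_cancel₀ hα0 h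
  have hχlα : chiSeq lα = ∑ w ∈ V', ({m | l m = w}.ncard : ℂ) * (α * w) := by
    rw [chiSeq_grouped lα hSα, hVα, Finset.sum_image hinj]
    refine Finset.sum_congr rfl (fun w hw => ?_)
    rw [hkey w hw]
  have hχl : α * chiSeq l = ∑ z ∈ V, ({m | l m = z}.ncard : ℂ) * (α * z) := by
    rw [chiSeq_grouped l hS, Finset.mul_sum]
    refine Finset.sum_congr rfl (fun z _ => ?_)
    ring
  have hsub : V' ⊆ V := Finset.filter_subset _ _
  have hdiff : α * chiSeq l - chiSeq lα
      = ∑ z ∈ V \ V', ({m | l m = z}.ncard : ℂ) * (α * z) := by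
    rw [hχl, hχlα, ← Finset.sum_sdiff hsub]
    ring
  rw [hdiff]
  calc ‖∑ z ∈ V \ V', ({m | l m = z}.ncard : ℂ) * (α * z)‖
      ≤ ∑ z ∈ V \ V', ‖({m | l m = z}.ncard : ℂ) * (α * z)‖ :=
        norm_sum_le _ _
    _ ≤ ∑ z ∈ V \ V', ({m | l m = z}.ncard : ℝ) := by
        refine Finset.sum_le_sum (fun z hz => ?_)
        rw [Finset.mem_sdiff] at hz
        have hle : ‖α * z‖ ≤ 1 := by
          have := hz.2
          rw [hV', Finset.mem_filter, not_and] at this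
          exact le_of_not_ge (this hz.1)
        rw [norm_mul, Complex.norm_natCast]
        calc ({m | l m = z}.ncard : ℝ) * ‖α * z‖
            ≤ ({m | l m = z}.ncard : ℝ) * 1 :=
              mul_le_mul_of_nonneg_left hle (by positivity)
          _ = _ := mul_one _
    _ ≤ ∑ z ∈ V, ({m | l m = z}.ncard : ℝ) := by
        refine Finset.sum_le_sum_of_subset_of_nonneg (Finset.sdiff_subset) ?_
        intro z _ _
        positivity
    _ = (nuSeq l : ℝ) := (nu_grouped l hS).symm

/-- If `T` is compact and `|α| ≤ 1`, then `|α χ(T) − χ(α T)| ≤ ν(T)`. -/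
theorem chi_smul_le
    [TopologicalSpace.SeparableSpace E] (hinf : ¬ FiniteDimensional ℂ E)
    (T : E →L[ℂ] E) (hT : IsCompactOperator ⇑T)
    (α : ℂ) (hα : ‖α‖ ≤ 1)
    (l : ℕ → ℂ) (hl : IsEigenvalueSeq T l)
    (lα : ℕ → ℂ) (hlα : IsEigenvalueSeq (α • T) lα) :
    ‖α * chiSeq l - chiSeq lα‖ ≤ (nuSeq l : ℝ) :=
  chi_smul_le' T hT α hα l hl lα hlα

end
end

section
/- Let φ : ℝ → ℝ be a nondecreasing C^∞ function with φ(x) = 0 for x ≤ 0 and φ(x) = 1 for x ≥ 1, and let ψ : ℝ → ℝ be a C² function with ψ(x) = 0 for x ≤ 0 and ψ''(x) = e^x (|φ''(x)| + 2|φ'(x)|) for x ≥ 0. Define h : ℂ → ℝ by h(0) = 0 and h(z) = ψ(log|z|) − (Re z) φ(log|z|) for z ≠ 0. Then h is subharmonic on ℂ. -/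
noncomputable section

open Set Filter

variable {E : Type*} [NormedAddCommGroup E] [InnerProductSpace ℂ E] [CompleteSpace E]

/-- A continuous function `ℂ → ℝ` is subharmonic when it satisfies the sub-mean-value
inequality on every circle. -/
def Subharmonic (f : ℂ → ℝ) : Prop :=
  Continuous f ∧ ∀ (z : ℂ) (r : ℝ), 0 < r →
    f z ≤ (2 * Real.pi)⁻¹ *
      ∫ θ in (0:ℝ)..(2 * Real.pi), f (z + (r : ℂ) * Complex.exp (θ * Complex.I))

open MeasureTheory
open scoped ContDiff

lemma param_hasDerivAt (F P : ℝ → ℝ → ℝ)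
    (hder : ∀ s θ, HasDerivAt (fun s => F s θ) (P s θ) s)
    (hFc : ∀ s, Continuous (F s))
    (hPc : Continuous fun p : ℝ × ℝ => P p.1 p.2) (s₀ : ℝ) :
    HasDerivAt (fun s => ∫ θ in (0:ℝ)..(2*Real.pi), F s θ)
      (∫ θ in (0:ℝ)..(2*Real.pi), P s₀ θ) s₀ := by
  obtain ⟨C, hC⟩ := ((isCompact_Icc (a := s₀-1) (b := s₀+1)).prod
    (isCompact_Icc (a := (0:ℝ)) (b := 2*Real.pi))).exists_bound_of_continuousOn
    hPc.continuousOn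
  refine (intervalIntegral.hasDerivAt_integral_of_dominated_loc_of_deriv_le
    (F := F) (F' := P) (bound := fun _ => C) (Metric.ball_mem_nhds s₀ one_pos) ?_ ?_ ?_ ?_ ?_ ?_).2
  · filter_upwards with s using (hFc s).aestronglyMeasurable
  · exact (hFc s₀).intervalIntegrable _ _
  · exact (hPc.comp (continuous_const.prodMk continuous_id)).aestronglyMeasurable
  · refine ae_of_all _ fun θ hθ s hs => ?_
    have h1 : s ∈ Icc (s₀-1) (s₀+1) := by
      have := mem_ball_iff_norm.mp hs
      rw [Real.norm_eq_abs, abs_lt] at this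
      constructor <;> linarith [this.1, this.2]
    have h2 : θ ∈ Icc (0:ℝ) (2*Real.pi) := by
      have hle : (0:ℝ) ≤ 2*Real.pi := by positivity
      rw [Set.uIoc_of_le hle] at hθ
      exact ⟨hθ.1.le, hθ.2⟩
    exact hC (s, θ) (Set.mk_mem_prod h1 h2)
  · exact intervalIntegrable_const
  · exact ae_of_all _ fun θ _ s _ => hder s θ

lemma subharmonic_of_partials (f fx fy fxx fxy fyx fyy : ℂ → ℝ)
    (hf : ∀ w, HasFDerivAt f (fx w • Complex.reCLM + fy w • Complex.imCLM) w)
    (hfx : ∀ w, HasFDerivAt fx (fxx w • Complex.reCLM + fxy w • Complex.imCLM) w)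
    (hfy : ∀ w, HasFDerivAt fy (fyx w • Complex.reCLM + fyy w • Complex.imCLM) w)
    (cfx : Continuous fx) (cfy : Continuous fy)
    (cfxx : Continuous fxx) (cfxy : Continuous fxy)
    (cfyx : Continuous fyx) (cfyy : Continuous fyy)
    (hlap : ∀ w, 0 ≤ fxx w + fyy w) : Subharmonic f := by
  have hfd : Differentiable ℝ f := fun w => (hf w).differentiableAt
  have hcf : Continuous f := hfd.continuous
  refine ⟨hcf, fun z r hr => ?_⟩
  set e : ℝ → ℂ := fun θ => Complex.exp (θ * Complex.I) with he_def
  set w : ℝ → ℝ → ℂ := fun s θ => z + s * e θ with hw_def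
  have hce : Continuous e := by fun_prop
  have hcw : Continuous fun p : ℝ × ℝ => w p.1 p.2 := by
    apply continuous_const.add
    exact (Complex.continuous_ofReal.comp continuous_fst).mul (hce.comp continuous_snd)
  have he_re : ∀ θ : ℝ, (e θ).re = Real.cos θ := fun θ => Complex.exp_ofReal_mul_I_re θ
  have he_im : ∀ θ : ℝ, (e θ).im = Real.sin θ := fun θ => Complex.exp_ofReal_mul_I_im θ
  have hw_s : ∀ (s θ : ℝ), HasDerivAt (fun s : ℝ => w s θ) (e θ) s := by
    intro s θ
    have h1 : HasDerivAt (fun s : ℝ => (s : ℂ)) 1 s := Complex.ofRealCLM.hasDerivAt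
    simpa [hw_def] using (h1.mul_const (e θ)).const_add z
  have he_θ : ∀ θ : ℝ, HasDerivAt e (e θ * Complex.I) θ := by
    intro θ
    have h1 : HasDerivAt (fun θ : ℝ => (θ : ℂ)) 1 θ := Complex.ofRealCLM.hasDerivAt
    simpa using (h1.mul_const Complex.I).cexp
  have hw_θ : ∀ (s θ : ℝ), HasDerivAt (fun θ => w s θ) ((s : ℂ) * (e θ * Complex.I)) θ :=
    fun s θ => (((he_θ θ).const_mul (s : ℂ)).const_add z)
  -- components of the θ-direction vector
  have hsie_re : ∀ (s θ : ℝ), ((s : ℂ) * (e θ * Complex.I)).re = -(s * Real.sin θ) := by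
    intro s θ
    simp [Complex.mul_re, Complex.mul_im, he_re, he_im]
  have hsie_im : ∀ (s θ : ℝ), ((s : ℂ) * (e θ * Complex.I)).im = s * Real.cos θ := by
    intro s θ
    simp [Complex.mul_re, Complex.mul_im, he_re, he_im]
  set P : ℝ → ℝ → ℝ := fun s θ => fx (w s θ) * Real.cos θ + fy (w s θ) * Real.sin θ with hP_def
  set R : ℝ → ℝ → ℝ := fun s θ =>
    (fxx (w s θ) * Real.cos θ + fxy (w s θ) * Real.sin θ) * Real.cos θ +
    (fyx (w s θ) * Real.cos θ + fyy (w s θ) * Real.sin θ) * Real.sin θ with hR_def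
  set Q : ℝ → ℝ → ℝ := fun s θ =>
    fxx (w s θ) * Real.sin θ ^ 2 - (fxy (w s θ) + fyx (w s θ)) * Real.sin θ * Real.cos θ +
    fyy (w s θ) * Real.cos θ ^ 2 with hQ_def
  set T : ℝ → ℝ → ℝ := fun s θ =>
    fx (w s θ) * (-(s * Real.sin θ)) + fy (w s θ) * (s * Real.cos θ) with hT_def
  have hF_s : ∀ (s θ : ℝ), HasDerivAt (fun s => f (w s θ)) (P s θ) s := by
    intro s θ
    have := (hf (w s θ)).comp_hasDerivAt s (hw_s s θ)
    simpa [Function.comp_def, he_re, he_im] using this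
  have hfx_s : ∀ (s θ : ℝ), HasDerivAt (fun s => fx (w s θ))
      (fxx (w s θ) * Real.cos θ + fxy (w s θ) * Real.sin θ) s := by
    intro s θ
    have := (hfx (w s θ)).comp_hasDerivAt s (hw_s s θ)
    simpa [Function.comp_def, he_re, he_im] using this
  have hfy_s : ∀ (s θ : ℝ), HasDerivAt (fun s => fy (w s θ))
      (fyx (w s θ) * Real.cos θ + fyy (w s θ) * Real.sin θ) s := by
    intro s θ
    have := (hfy (w s θ)).comp_hasDerivAt s (hw_s s θ)
    simpa [Function.comp_def, he_re, he_im] using this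
  have hP_s : ∀ (s θ : ℝ), HasDerivAt (fun s => P s θ) (R s θ) s := by
    intro s θ
    exact ((hfx_s s θ).mul_const (Real.cos θ)).add ((hfy_s s θ).mul_const (Real.sin θ))
  have hfx_θ : ∀ (s θ : ℝ), HasDerivAt (fun θ => fx (w s θ))
      (fxx (w s θ) * (-(s * Real.sin θ)) + fxy (w s θ) * (s * Real.cos θ)) θ := by
    intro s θ
    have := (hfx (w s θ)).comp_hasDerivAt θ (hw_θ s θ)
    simpa [Function.comp_def, hsie_re, hsie_im] using this
  have hfy_θ : ∀ (s θ : ℝ), HasDerivAt (fun θ => fy (w s θ))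
      (fyx (w s θ) * (-(s * Real.sin θ)) + fyy (w s θ) * (s * Real.cos θ)) θ := by
    intro s θ
    have := (hfy (w s θ)).comp_hasDerivAt θ (hw_θ s θ)
    simpa [Function.comp_def, hsie_re, hsie_im] using this
  have hT_θ : ∀ (s θ : ℝ), HasDerivAt (fun θ => T s θ) (s^2 * Q s θ - s * P s θ) θ := by
    intro s θ
    have h1 : HasDerivAt (fun θ : ℝ => -(s * Real.sin θ)) (-(s * Real.cos θ)) θ := by
      exact ((Real.hasDerivAt_sin θ).const_mul s).neg
    have h2 : HasDerivAt (fun θ : ℝ => s * Real.cos θ) (-(s * Real.sin θ)) θ := by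
      simpa [mul_comm] using ((Real.hasDerivAt_cos θ).const_mul s)
    have big := ((hfx_θ s θ).mul h1).add ((hfy_θ s θ).mul h2)
    refine big.congr_deriv ?_
    simp only [hQ_def, hP_def]
    ring
  -- continuity of integrands
  have hrow : ∀ {g : ℝ × ℝ → ℝ}, Continuous g → ∀ s : ℝ, Continuous fun θ => g (s, θ) :=
    fun hg s => hg.comp (continuous_const.prodMk continuous_id)
  have cFp : Continuous fun p : ℝ × ℝ => f (w p.1 p.2) := hcf.comp hcw
  have ccos : Continuous fun p : ℝ × ℝ => Real.cos p.2 := Real.continuous_cos.comp continuous_snd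
  have csin : Continuous fun p : ℝ × ℝ => Real.sin p.2 := Real.continuous_sin.comp continuous_snd
  have cPp : Continuous fun p : ℝ × ℝ => P p.1 p.2 :=
    ((cfx.comp hcw).mul ccos).add ((cfy.comp hcw).mul csin)
  have cRp : Continuous fun p : ℝ × ℝ => R p.1 p.2 :=
    ((((cfxx.comp hcw).mul ccos).add ((cfxy.comp hcw).mul csin)).mul ccos).add
      ((((cfyx.comp hcw).mul ccos).add ((cfyy.comp hcw).mul csin)).mul csin)
  have cQp : Continuous fun p : ℝ × ℝ => Q p.1 p.2 := by
    refine (((cfxx.comp hcw).mul (csin.pow 2)).sub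
      ((((cfxy.comp hcw).add (cfyx.comp hcw)).mul csin).mul ccos)).add
      ((cfyy.comp hcw).mul (ccos.pow 2))
  set G : ℝ → ℝ := fun s => ∫ θ in (0:ℝ)..(2*Real.pi), f (w s θ) with hG_def
  set G₁ : ℝ → ℝ := fun s => ∫ θ in (0:ℝ)..(2*Real.pi), P s θ with hG1_def
  set G₂ : ℝ → ℝ := fun s => ∫ θ in (0:ℝ)..(2*Real.pi), R s θ with hG2_def
  set intQ : ℝ → ℝ := fun s => ∫ θ in (0:ℝ)..(2*Real.pi), Q s θ with hintQ_def
  have hG : ∀ s, HasDerivAt G (G₁ s) s := fun s =>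
    param_hasDerivAt _ _ (fun s θ => hF_s s θ) (fun s => hrow cFp s) cPp s
  have hG₁ : ∀ s, HasDerivAt G₁ (G₂ s) s := fun s =>
    param_hasDerivAt _ _ (fun s θ => hP_s s θ) (fun s => hrow cPp s) cRp s
  have hTint : ∀ s : ℝ, (∫ θ in (0:ℝ)..(2*Real.pi), (s^2 * Q s θ - s * P s θ)) = 0 := by
    intro s
    rw [intervalIntegral.integral_eq_sub_of_hasDerivAt (fun θ _ => hT_θ s θ)
      (((continuous_const.mul (hrow cQp s)).sub (continuous_const.mul (hrow cPp s))).intervalIntegrable _ _)]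
    have hw2 : w s (2*Real.pi) = w s 0 := by
      have hcast : ((2*Real.pi : ℝ) : ℂ) * Complex.I = 2*(Real.pi:ℂ)*Complex.I := by
        push_cast; ring
      simp only [hw_def, he_def, hcast, Complex.exp_two_pi_mul_I]
      norm_num
    simp [hT_def, hw2, Real.sin_two_pi, Real.cos_two_pi]
  have key1 : ∀ s : ℝ, s * G₁ s = s^2 * intQ s := by
    intro s
    have h1 := hTint s
    rw [intervalIntegral.integral_sub (f := fun θ => s^2 * Q s θ) (g := fun θ => s * P s θ) ((continuous_const.mul (hrow cQp s) : Continuous fun θ => s^2 * Q s θ).intervalIntegrable _ _)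
      ((continuous_const.mul (hrow cPp s) : Continuous fun θ => s * P s θ).intervalIntegrable _ _),
      intervalIntegral.integral_const_mul, intervalIntegral.integral_const_mul] at h1
    rw [hG1_def, hintQ_def]
    simp only
    linarith [h1]
  have hM : ∀ s : ℝ, HasDerivAt (fun s => s * G₁ s) (G₁ s + s * G₂ s) s := by
    intro s
    have := (hasDerivAt_id s).mul (hG₁ s)
    exact this.congr_deriv (by simp)
  have hQR : ∀ s θ, Q s θ + R s θ = fxx (w s θ) + fyy (w s θ) := by
    intro s θ
    have hsc := Real.sin_sq_add_cos_sq θ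
    simp only [hQ_def, hR_def]
    linear_combination (fxx (w s θ) + fyy (w s θ)) * hsc
  have h2pi : (0:ℝ) < 2 * Real.pi := by positivity
  have hG1zero : G₁ 0 = 0 := by
    rw [hG1_def]
    simp only
    have heq : ∀ θ ∈ uIcc (0:ℝ) (2*Real.pi), P 0 θ = fx z * Real.cos θ + fy z * Real.sin θ := by
      intro θ _; simp [hP_def, hw_def]
    rw [intervalIntegral.integral_congr heq,
      intervalIntegral.integral_add (f := fun θ => fx z * Real.cos θ) (g := fun θ => fy z * Real.sin θ) ((continuous_const.mul Real.continuous_cos : Continuous fun θ => fx z * Real.cos θ).intervalIntegrable _ _)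
        ((continuous_const.mul Real.continuous_sin : Continuous fun θ => fy z * Real.sin θ).intervalIntegrable _ _),
      intervalIntegral.integral_const_mul, intervalIntegral.integral_const_mul]
    simp [Real.sin_two_pi, Real.cos_two_pi]
  have hMd : ∀ s ∈ Icc (0:ℝ) r, 0 ≤ G₁ s + s * G₂ s := by
    intro s hs
    rcases eq_or_lt_of_le hs.1 with h0 | h0
    · rw [← h0, hG1zero]; simp
    · have hG1s : G₁ s = s * intQ s := by
        have hk := key1 s
        have hs' : s ≠ 0 := ne_of_gt h0
        have : s * G₁ s = s * (s * intQ s) := by rw [hk]; ring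
        exact mul_left_cancel₀ hs' this
      have hQRint : intQ s + G₂ s =
          ∫ θ in (0:ℝ)..(2*Real.pi), (fxx (w s θ) + fyy (w s θ)) := by
        rw [hintQ_def, hG2_def]
        simp only
        rw [← intervalIntegral.integral_add ((hrow cQp s).intervalIntegrable _ _)
          ((hrow cRp s).intervalIntegrable _ _)]
        exact intervalIntegral.integral_congr fun θ _ => hQR s θ
      have hnn : 0 ≤ intQ s + G₂ s := by
        rw [hQRint]
        exact intervalIntegral.integral_nonneg h2pi.le fun θ _ => hlap _
      calc (0:ℝ) ≤ s * (intQ s + G₂ s) := mul_nonneg h0.le hnn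
        _ = G₁ s + s * G₂ s := by rw [hG1s]; ring
  have hMdiff : Differentiable ℝ (fun s => s * G₁ s) := fun s => (hM s).differentiableAt
  have hMmono : MonotoneOn (fun s => s * G₁ s) (Icc 0 r) := by
    apply monotoneOn_of_deriv_nonneg (convex_Icc 0 r) hMdiff.continuous.continuousOn
      hMdiff.differentiableOn
    intro s hs
    rw [interior_Icc] at hs
    rw [(hM s).deriv]
    exact hMd s (Ioo_subset_Icc_self hs)
  have h0mem : (0:ℝ) ∈ Icc (0:ℝ) r := ⟨le_refl _, hr.le⟩
  have hG1nn : ∀ s ∈ Ioo (0:ℝ) r, 0 ≤ G₁ s := by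
    intro s hs
    have h2 := hMmono h0mem (Ioo_subset_Icc_self hs) hs.1.le
    have h3 : (0:ℝ) ≤ s * G₁ s := by simpa [hG1zero] using h2
    nlinarith [h3, hs.1]
  have hGdiff : Differentiable ℝ G := fun s => (hG s).differentiableAt
  have hGmono : MonotoneOn G (Icc 0 r) := by
    apply monotoneOn_of_deriv_nonneg (convex_Icc 0 r) hGdiff.continuous.continuousOn
      hGdiff.differentiableOn
    intro s hs
    rw [interior_Icc] at hs
    rw [(hG s).deriv]
    exact hG1nn s hs
  have hfinal : G 0 ≤ G r := hGmono h0mem ⟨hr.le, le_refl _⟩ hr.le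
  have hG0 : G 0 = 2 * Real.pi * f z := by
    rw [hG_def]
    simp only
    have heq : ∀ θ ∈ uIcc (0:ℝ) (2*Real.pi), f (w 0 θ) = f z := by
      intro θ _; simp [hw_def]
    rw [intervalIntegral.integral_congr heq, intervalIntegral.integral_const]
    simp [mul_comm]
  rw [hG0] at hfinal
  have hgoal : f z ≤ (2 * Real.pi)⁻¹ * G r := by
    rw [le_inv_mul_iff₀ h2pi]
    exact hfinal
  exact hgoal

lemma hasFDerivAt_div'' {c d : ℂ → ℝ} {c' d' : ℂ →L[ℝ] ℝ} {z : ℂ}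
    (hc : HasFDerivAt c c' z) (hd : HasFDerivAt d d' z) (hz : d z ≠ 0) :
    HasFDerivAt (fun w => c w / d w)
      ((d z)⁻¹ • c' + (-(c z) / (d z)^2) • d') z := by
  have hinv : HasFDerivAt (fun w => (d w)⁻¹) ((-((d z) ^ 2)⁻¹) • d') z :=
    (hasDerivAt_inv hz).comp_hasFDerivAt z hd
  have h1 := hc.mul hinv
  have h2 : HasFDerivAt (fun w => c w / d w)
      (c z • ((-((d z) ^ 2)⁻¹) • d') + (d z)⁻¹ • c') z :=
    h1.congr_of_eventuallyEq (Filter.Eventually.of_forall fun w => div_eq_mul_inv (c w) (d w))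
  convert h2 using 1
  ext v
  simp only [ContinuousLinearMap.add_apply, ContinuousLinearMap.coe_smul',
    Pi.smul_apply, smul_eq_mul]
  field_simp
  ring

lemma deriv_zero_on_Iic {g : ℝ → ℝ} (hg : Continuous (deriv g)) (h0 : ∀ x ≤ (0:ℝ), g x = 0) :
    ∀ x ≤ (0:ℝ), deriv g x = 0 := by
  have hlt : ∀ x < (0:ℝ), deriv g x = 0 := by
    intro x hx
    have he : g =ᶠ[nhds x] fun _ => 0 :=
      Filter.eventuallyEq_of_mem (Iio_mem_nhds hx) fun y hy => h0 y (le_of_lt hy)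
    rw [he.deriv_eq, deriv_const]
  intro x hx
  rcases lt_or_eq_of_le hx with hlt' | heq
  · exact hlt x hlt'
  · rw [heq]
    have h1 : Filter.Tendsto (deriv g) (nhdsWithin 0 (Iio 0)) (nhds (deriv g 0)) :=
      (hg.tendsto 0).mono_left nhdsWithin_le_nhds
    have h2 : Filter.Tendsto (deriv g) (nhdsWithin 0 (Iio 0)) (nhds 0) := by
      apply Filter.Tendsto.congr' _ tendsto_const_nhds
      filter_upwards [self_mem_nhdsWithin] with y hy
      exact (hlt y hy).symm
    exact tendsto_nhds_unique h1 h2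

def tt : ℂ → ℝ := fun z => Real.log (Complex.normSq z) / 2

lemma tt_eq (z : ℂ) : Real.log ‖z‖ = tt z := by
  unfold tt
  rw [Complex.norm_def, Real.log_sqrt (Complex.normSq_nonneg z)]

lemma tt_nonpos {z : ℂ} (hz : ‖z‖ < 1) : tt z ≤ 0 := by
  rw [← tt_eq]
  exact Real.log_nonpos (norm_nonneg z) hz.le

lemma tt_continuousAt {z : ℂ} (hz : z ≠ 0) : ContinuousAt tt z := by
  have hN : Complex.normSq z ≠ 0 := ne_of_gt (Complex.normSq_pos.mpr hz)
  exact ((Real.continuousAt_log hN).comp Complex.continuous_normSq.continuousAt).div_const 2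

lemma eventually_norm_lt_one {z : ℂ} (hz : ‖z‖ < 1) : ∀ᶠ w in nhds z, ‖w‖ < 1 := by
  have hmem : Metric.ball (0:ℂ) 1 ∈ nhds z :=
    Metric.isOpen_ball.mem_nhds (by simpa [mem_ball_zero_iff] using hz)
  filter_upwards [hmem] with w hw
  simpa [mem_ball_zero_iff] using hw

lemma contAux2 (c : ℝ → ℝ) (hc : Continuous c) (hc0 : ∀ x ≤ (0:ℝ), c x = 0)
    (g : ℂ → ℝ) (hg : ∀ z : ℂ, z ≠ 0 → ContinuousAt g z) :
    Continuous fun z : ℂ => c (tt z) * g z := by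
  rw [continuous_iff_continuousAt]
  intro z
  rcases lt_or_ge ‖z‖ 1 with hz | hz
  · have hev : (fun z : ℂ => c (tt z) * g z) =ᶠ[nhds z] fun _ => 0 := by
      filter_upwards [eventually_norm_lt_one hz] with w hw
      rw [hc0 _ (tt_nonpos hw), zero_mul]
    exact (continuousAt_congr hev).mpr continuousAt_const
  · have hz0 : z ≠ 0 := by
      intro h; rw [h] at hz; simp at hz; linarith
    exact (hc.continuousAt.comp (tt_continuousAt hz0)).mul (hg z hz0)

lemma contAux1 (c : ℝ → ℝ) (hc : Continuous c) (hc0 : ∀ x ≤ (0:ℝ), c x = 0) :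
    Continuous fun z : ℂ => c (tt z) := by
  have := contAux2 c hc hc0 (fun _ => 1) (fun _ _ => continuousAt_const)
  simpa using this

set_option maxHeartbeats 2000000 in
/-- Let `φ : ℝ → ℝ` be nondecreasing, `C^∞`, with `φ = 0` on `(-∞,0]` and
`φ = 1` on `[1,∞)`; let `ψ : ℝ → ℝ` be `C²` with `ψ = 0` on `(-∞,0]` and
`ψ'' = eˣ(|φ''| + 2|φ'|)` on `[0,∞)`. Then `h(z) = ψ(log|z|) − (Re z) φ(log|z|)` (with
`h(0) = 0`) is subharmonic on `ℂ`. -/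
theorem h_subharmonic
    (φ : ℝ → ℝ) (hφmono : Monotone φ) (hφsmooth : ContDiff ℝ (⊤ : ℕ∞) φ)
    (hφ0 : ∀ x ≤ (0:ℝ), φ x = 0) (hφ1 : ∀ x ≥ (1:ℝ), φ x = 1)
    (ψ : ℝ → ℝ) (hψsmooth : ContDiff ℝ 2 ψ)
    (hψ0 : ∀ x ≤ (0:ℝ), ψ x = 0)
    (hψ'' : ∀ x ≥ (0:ℝ),
      deriv (deriv ψ) x = Real.exp x * (|deriv (deriv φ) x| + 2 * |deriv φ x|))
    (h : ℂ → ℝ) (h0 : h 0 = 0)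
    (hz : ∀ z : ℂ, z ≠ 0 → h z = ψ (Real.log ‖z‖) - z.re * φ (Real.log ‖z‖)) :
    Subharmonic h := by
  -- smoothness facts
  have h21 : (2 : WithTop ℕ∞) = 1 + 1 := by norm_num
  have hψ11 : ContDiff ℝ ((1 : WithTop ℕ∞) + 1) ψ := by rw [← h21]; exact_mod_cast hψsmooth
  have hψ1 : ContDiff ℝ (1 : WithTop ℕ∞) (deriv ψ) := (contDiff_succ_iff_deriv.mp hψ11).2.2
  have hψd : Differentiable ℝ ψ := (contDiff_succ_iff_deriv.mp hψ11).1
  have had : Differentiable ℝ (deriv ψ) := hψ1.differentiable (by norm_num)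
  have hca : Continuous (deriv ψ) := had.continuous
  have hca2 : Continuous (deriv (deriv ψ)) := hψ1.continuous_deriv le_rfl
  have hφtop : ContDiff ℝ (∞ : WithTop ℕ∞) φ := by exact_mod_cast hφsmooth
  have hφd : Differentiable ℝ φ := hφtop.differentiable (by norm_num)
  have hφ' : ContDiff ℝ (∞ : WithTop ℕ∞) (deriv φ) := (contDiff_infty_iff_deriv.mp hφtop).2
  have hbd : Differentiable ℝ (deriv φ) := hφ'.differentiable (by norm_num)
  have hφ'' : ContDiff ℝ (∞ : WithTop ℕ∞) (deriv (deriv φ)) := (contDiff_infty_iff_deriv.mp hφ').2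
  have hcb : Continuous (deriv φ) := hbd.continuous
  have hcb2 : Continuous (deriv (deriv φ)) := hφ''.continuous
  have hφc : Continuous φ := hφd.continuous
  have hψc : Continuous ψ := hψd.continuous
  -- vanishing facts
  have haz : ∀ x ≤ (0:ℝ), deriv ψ x = 0 := deriv_zero_on_Iic hca hψ0
  have ha2z : ∀ x ≤ (0:ℝ), deriv (deriv ψ) x = 0 := deriv_zero_on_Iic hca2 haz
  have hbz : ∀ x ≤ (0:ℝ), deriv φ x = 0 := deriv_zero_on_Iic hcb hφ0
  have hb2z : ∀ x ≤ (0:ℝ), deriv (deriv φ) x = 0 := deriv_zero_on_Iic hcb2 hbz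
  -- basic derivative building blocks
  have hre : ∀ z : ℂ, HasFDerivAt (fun w : ℂ => w.re) Complex.reCLM z :=
    fun z => Complex.reCLM.hasFDerivAt
  have him : ∀ z : ℂ, HasFDerivAt (fun w : ℂ => w.im) Complex.imCLM z :=
    fun z => Complex.imCLM.hasFDerivAt
  have hNder : ∀ z : ℂ, HasFDerivAt Complex.normSq
      ((2*z.re) • Complex.reCLM + (2*z.im) • Complex.imCLM) z := by
    intro z
    have h1 := ((hre z).mul (hre z)).add ((him z).mul (him z))
    have h2 : HasFDerivAt Complex.normSq
        ((z.re • Complex.reCLM + z.re • Complex.reCLM) +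
         (z.im • Complex.imCLM + z.im • Complex.imCLM)) z :=
      h1.congr_of_eventuallyEq (Filter.Eventually.of_forall fun w => (Complex.normSq_apply w))
    convert h2 using 1
    ext v
    simp only [ContinuousLinearMap.add_apply, ContinuousLinearMap.coe_smul', Pi.smul_apply,
      smul_eq_mul, Complex.reCLM_apply, Complex.imCLM_apply]
    ring
  have htder : ∀ z : ℂ, z ≠ 0 → HasFDerivAt tt
      ((z.re / Complex.normSq z) • Complex.reCLM +
       (z.im / Complex.normSq z) • Complex.imCLM) z := by
    intro z hz0
    have hN0 : Complex.normSq z ≠ 0 := ne_of_gt (Complex.normSq_pos.mpr hz0)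
    have hout : HasDerivAt (fun y : ℝ => Real.log y / 2) ((Complex.normSq z)⁻¹ / 2)
        (Complex.normSq z) := (Real.hasDerivAt_log hN0).div_const 2
    have h1 : HasFDerivAt tt (((Complex.normSq z)⁻¹ / 2) •
        ((2*z.re) • Complex.reCLM + (2*z.im) • Complex.imCLM)) z :=
      hout.comp_hasFDerivAt z (hNder z)
    convert h1 using 1
    ext v
    simp only [ContinuousLinearMap.add_apply, ContinuousLinearMap.coe_smul', Pi.smul_apply,
      smul_eq_mul, Complex.reCLM_apply, Complex.imCLM_apply]
    field_simp
  have hcomp : ∀ (c : ℝ → ℝ), Differentiable ℝ c → ∀ z : ℂ, z ≠ 0 →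
      HasFDerivAt (fun w => c (tt w))
        ((deriv c (tt z) * (z.re / Complex.normSq z)) • Complex.reCLM +
         (deriv c (tt z) * (z.im / Complex.normSq z)) • Complex.imCLM) z := by
    intro c hcd z hz0
    have h1 := ((hcd (tt z)).hasDerivAt).comp_hasFDerivAt z (htder z hz0)
    refine h1.congr_fderiv ?_
    ext v
    simp only [ContinuousLinearMap.add_apply, ContinuousLinearMap.coe_smul', Pi.smul_apply,
      smul_eq_mul, Complex.reCLM_apply, Complex.imCLM_apply]
    ring
  -- partial derivative function definitions
  set FX : ℂ → ℝ := fun z => deriv ψ (tt z) * (z.re / Complex.normSq z)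
       - (φ (tt z) + deriv φ (tt z) * (z.re * z.re / Complex.normSq z)) with hFX
  set FY : ℂ → ℝ := fun z => deriv ψ (tt z) * (z.im / Complex.normSq z)
       - deriv φ (tt z) * (z.re * z.im / Complex.normSq z) with hFY
  set FXX : ℂ → ℝ := fun z =>
      deriv (deriv ψ) (tt z) * (z.re * z.re / (Complex.normSq z * Complex.normSq z))
       + deriv ψ (tt z) * ((Complex.normSq z - 2*(z.re*z.re)) / (Complex.normSq z * Complex.normSq z))
       - (deriv φ (tt z) * (2 * z.re / Complex.normSq z)
          + deriv (deriv φ) (tt z) * (z.re * z.re * z.re / (Complex.normSq z * Complex.normSq z))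
          + deriv φ (tt z) * (z.re * (Complex.normSq z - 2*(z.re*z.re)) / (Complex.normSq z * Complex.normSq z))) with hFXX
  set FXY : ℂ → ℝ := fun z =>
      deriv (deriv ψ) (tt z) * (z.re * z.im / (Complex.normSq z * Complex.normSq z))
       - deriv ψ (tt z) * (2 * z.re * z.im / (Complex.normSq z * Complex.normSq z))
       - (deriv φ (tt z) * (z.im / Complex.normSq z)
          + deriv (deriv φ) (tt z) * (z.re * z.re * z.im / (Complex.normSq z * Complex.normSq z))
          - deriv φ (tt z) * (2 * z.re * z.re * z.im / (Complex.normSq z * Complex.normSq z))) with hFXY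
  set FYY : ℂ → ℝ := fun z =>
      deriv (deriv ψ) (tt z) * (z.im * z.im / (Complex.normSq z * Complex.normSq z))
       + deriv ψ (tt z) * ((Complex.normSq z - 2*(z.im*z.im)) / (Complex.normSq z * Complex.normSq z))
       - (deriv φ (tt z) * (z.re / Complex.normSq z)
          + deriv (deriv φ) (tt z) * (z.re * z.im * z.im / (Complex.normSq z * Complex.normSq z))
          - deriv φ (tt z) * (2 * z.re * z.im * z.im / (Complex.normSq z * Complex.normSq z))) with hFYY
  -- vanishing on the unit ball
  have hc6 : ∀ w : ℂ, ‖w‖ < 1 → ψ (tt w) = 0 ∧ φ (tt w) = 0 ∧ deriv ψ (tt w) = 0 ∧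
      deriv φ (tt w) = 0 ∧ deriv (deriv ψ) (tt w) = 0 ∧ deriv (deriv φ) (tt w) = 0 :=
    fun w hw => ⟨hψ0 _ (tt_nonpos hw), hφ0 _ (tt_nonpos hw), haz _ (tt_nonpos hw),
      hbz _ (tt_nonpos hw), ha2z _ (tt_nonpos hw), hb2z _ (tt_nonpos hw)⟩
  have hh0 : ∀ w : ℂ, ‖w‖ < 1 → h w = 0 := by
    intro w hw
    rcases eq_or_ne w 0 with rfl | hw0
    · exact h0
    · rw [hz w hw0, tt_eq, (hc6 w hw).1, (hc6 w hw).2.1]; ring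
  have hFX0 : ∀ w : ℂ, ‖w‖ < 1 → FX w = 0 := by
    intro w hw
    rw [hFX]
    simp [(hc6 w hw).2.1, (hc6 w hw).2.2.1, (hc6 w hw).2.2.2.1]
  have hFY0 : ∀ w : ℂ, ‖w‖ < 1 → FY w = 0 := by
    intro w hw
    rw [hFY]
    simp [(hc6 w hw).2.2.1, (hc6 w hw).2.2.2.1]
  have hFXX0 : ∀ w : ℂ, ‖w‖ < 1 → FXX w = 0 := by
    intro w hw
    rw [hFXX]
    simp [(hc6 w hw).2.2.1, (hc6 w hw).2.2.2.1, (hc6 w hw).2.2.2.2.1, (hc6 w hw).2.2.2.2.2]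
  have hFXY0 : ∀ w : ℂ, ‖w‖ < 1 → FXY w = 0 := by
    intro w hw
    rw [hFXY]
    simp [(hc6 w hw).2.2.1, (hc6 w hw).2.2.2.1, (hc6 w hw).2.2.2.2.1, (hc6 w hw).2.2.2.2.2]
  have hFYY0 : ∀ w : ℂ, ‖w‖ < 1 → FYY w = 0 := by
    intro w hw
    rw [hFYY]
    simp [(hc6 w hw).2.2.1, (hc6 w hw).2.2.2.1, (hc6 w hw).2.2.2.2.1, (hc6 w hw).2.2.2.2.2]
  have hne : ∀ z : ℂ, 1 ≤ ‖z‖ → z ≠ 0 := by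
    intro z hz1 hc
    rw [hc] at hz1; simp at hz1; linarith
  -- derivative of h
  have hf : ∀ w, HasFDerivAt h (FX w • Complex.reCLM + FY w • Complex.imCLM) w := by
    intro z
    rcases lt_or_ge ‖z‖ 1 with hz1 | hz1
    · have hev : h =ᶠ[nhds z] fun _ => 0 := by
        filter_upwards [eventually_norm_lt_one hz1] with w hw using hh0 w hw
      have h1 : HasFDerivAt h (0 : ℂ →L[ℝ] ℝ) z :=
        (hasFDerivAt_const (0:ℝ) z).congr_of_eventuallyEq hev
      simpa [hFX0 z hz1, hFY0 z hz1] using h1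
    · have hz0 : z ≠ 0 := hne z hz1
      have hN0 : Complex.normSq z ≠ 0 := ne_of_gt (Complex.normSq_pos.mpr hz0)
      have hψt := hcomp ψ hψd z hz0
      have hφt := hcomp φ hφd z hz0
      have hform := hψt.sub ((hre z).mul hφt)
      have hev : h =ᶠ[nhds z] fun w : ℂ => ψ (tt w) - w.re * φ (tt w) := by
        filter_upwards [compl_singleton_mem_nhds hz0] with w hw
        rw [hz w (by simpa using hw), tt_eq]
      have hmain := hform.congr_of_eventuallyEq hev
      refine hmain.congr_fderiv ?_
      ext v
      simp only [hFX, hFY, ContinuousLinearMap.add_apply, ContinuousLinearMap.sub_apply,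
        ContinuousLinearMap.coe_smul', Pi.smul_apply, smul_eq_mul, Complex.reCLM_apply,
        Complex.imCLM_apply, ContinuousLinearMap.coe_sub', Pi.sub_apply]
      field_simp
      ring
  -- derivative of FX
  have hfx : ∀ w, HasFDerivAt FX (FXX w • Complex.reCLM + FXY w • Complex.imCLM) w := by
    intro z
    rcases lt_or_ge ‖z‖ 1 with hz1 | hz1
    · have hev : FX =ᶠ[nhds z] fun _ => 0 := by
        filter_upwards [eventually_norm_lt_one hz1] with w hw using hFX0 w hw
      have h1 : HasFDerivAt FX (0 : ℂ →L[ℝ] ℝ) z :=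
        (hasFDerivAt_const (0:ℝ) z).congr_of_eventuallyEq hev
      simpa [hFXX0 z hz1, hFXY0 z hz1] using h1
    · have hz0 : z ≠ 0 := hne z hz1
      have hN0 : Complex.normSq z ≠ 0 := ne_of_gt (Complex.normSq_pos.mpr hz0)
      have hterm1 := (hcomp (deriv ψ) had z hz0).mul
        (hasFDerivAt_div'' (hre z) (hNder z) hN0)
      have hterm2 := hcomp φ hφd z hz0
      have hterm3 := (hcomp (deriv φ) hbd z hz0).mul
        (hasFDerivAt_div'' ((hre z).mul (hre z)) (hNder z) hN0)
      have hform := hterm1.sub (hterm2.add hterm3)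
      rw [hFX]
      refine hform.congr_fderiv ?_
      ext v
      simp only [hFXX, hFXY, ContinuousLinearMap.add_apply, ContinuousLinearMap.sub_apply,
        ContinuousLinearMap.coe_smul', Pi.smul_apply, smul_eq_mul, Complex.reCLM_apply,
        Complex.imCLM_apply, ContinuousLinearMap.coe_sub', Pi.sub_apply, neg_mul, Pi.mul_apply]
      field_simp
      ring
  -- derivative of FY
  have hfy : ∀ w, HasFDerivAt FY (FXY w • Complex.reCLM + FYY w • Complex.imCLM) w := by
    intro z
    rcases lt_or_ge ‖z‖ 1 with hz1 | hz1
    · have hev : FY =ᶠ[nhds z] fun _ => 0 := by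
        filter_upwards [eventually_norm_lt_one hz1] with w hw using hFY0 w hw
      have h1 : HasFDerivAt FY (0 : ℂ →L[ℝ] ℝ) z :=
        (hasFDerivAt_const (0:ℝ) z).congr_of_eventuallyEq hev
      simpa [hFXY0 z hz1, hFYY0 z hz1] using h1
    · have hz0 : z ≠ 0 := hne z hz1
      have hN0 : Complex.normSq z ≠ 0 := ne_of_gt (Complex.normSq_pos.mpr hz0)
      have hterm1 := (hcomp (deriv ψ) had z hz0).mul
        (hasFDerivAt_div'' (him z) (hNder z) hN0)
      have hterm2 := (hcomp (deriv φ) hbd z hz0).mul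
        (hasFDerivAt_div'' ((hre z).mul (him z)) (hNder z) hN0)
      have hform := hterm1.sub hterm2
      rw [hFY]
      refine hform.congr_fderiv ?_
      ext v
      simp only [hFXY, hFYY, ContinuousLinearMap.add_apply, ContinuousLinearMap.sub_apply,
        ContinuousLinearMap.coe_smul', Pi.smul_apply, smul_eq_mul, Complex.reCLM_apply,
        Complex.imCLM_apply, ContinuousLinearMap.coe_sub', Pi.sub_apply, neg_mul, Pi.mul_apply]
      field_simp
      ring
  -- continuity
  have hgdiv : ∀ (p : ℂ → ℝ), Continuous p → ∀ z : ℂ, z ≠ 0 →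
      ContinuousAt (fun w => p w / Complex.normSq w) z := fun p hp z hz0 =>
    hp.continuousAt.div Complex.continuous_normSq.continuousAt
      (ne_of_gt (Complex.normSq_pos.mpr hz0))
  have hgdiv2 : ∀ (p : ℂ → ℝ), Continuous p → ∀ z : ℂ, z ≠ 0 →
      ContinuousAt (fun w => p w / (Complex.normSq w * Complex.normSq w)) z := fun p hp z hz0 =>
    hp.continuousAt.div (Complex.continuous_normSq.mul Complex.continuous_normSq).continuousAt
      (mul_ne_zero (ne_of_gt (Complex.normSq_pos.mpr hz0)) (ne_of_gt (Complex.normSq_pos.mpr hz0)))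
  have cre : Continuous fun w : ℂ => w.re := Complex.continuous_re
  have cim : Continuous fun w : ℂ => w.im := Complex.continuous_im
  have cN : Continuous Complex.normSq := Complex.continuous_normSq
  have cfx : Continuous FX := by
    rw [hFX]
    exact (contAux2 (deriv ψ) hca haz _ (hgdiv _ cre)).sub
      ((contAux1 φ hφc hφ0).add (contAux2 (deriv φ) hcb hbz _ (hgdiv _ (cre.mul cre))))
  have cfy : Continuous FY := by
    rw [hFY]
    exact (contAux2 (deriv ψ) hca haz _ (hgdiv _ cim)).sub
      (contAux2 (deriv φ) hcb hbz _ (hgdiv _ (cre.mul cim)))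
  have cfxx : Continuous FXX := by
    rw [hFXX]
    exact ((contAux2 (deriv (deriv ψ)) hca2 ha2z _ (hgdiv2 _ (cre.mul cre))).add
      (contAux2 (deriv ψ) hca haz _ (hgdiv2 _ (cN.sub (continuous_const.mul (cre.mul cre)))))).sub
      ((contAux2 (deriv φ) hcb hbz _ (hgdiv _ (continuous_const.mul cre))).add
        (contAux2 (deriv (deriv φ)) hcb2 hb2z _ (hgdiv2 _ ((cre.mul cre).mul cre))) |>.add
        (contAux2 (deriv φ) hcb hbz _ (hgdiv2 _ (cre.mul (cN.sub (continuous_const.mul (cre.mul cre)))))))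
  have cfxy : Continuous FXY := by
    rw [hFXY]
    exact ((contAux2 (deriv (deriv ψ)) hca2 ha2z _ (hgdiv2 _ (cre.mul cim))).sub
      (contAux2 (deriv ψ) hca haz _ (hgdiv2 _ ((continuous_const.mul cre).mul cim)))).sub
      (((contAux2 (deriv φ) hcb hbz _ (hgdiv _ cim)).add
        (contAux2 (deriv (deriv φ)) hcb2 hb2z _ (hgdiv2 _ ((cre.mul cre).mul cim)))).sub
        (contAux2 (deriv φ) hcb hbz _ (hgdiv2 _ (((continuous_const.mul cre).mul cre).mul cim))))
  have cfyy : Continuous FYY := by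
    rw [hFYY]
    exact ((contAux2 (deriv (deriv ψ)) hca2 ha2z _ (hgdiv2 _ (cim.mul cim))).add
      (contAux2 (deriv ψ) hca haz _ (hgdiv2 _ (cN.sub (continuous_const.mul (cim.mul cim)))))).sub
      (((contAux2 (deriv φ) hcb hbz _ (hgdiv _ cre)).add
        (contAux2 (deriv (deriv φ)) hcb2 hb2z _ (hgdiv2 _ ((cre.mul cim).mul cim)))).sub
        (contAux2 (deriv φ) hcb hbz _ (hgdiv2 _ (((continuous_const.mul cre).mul cim).mul cim))))
  -- Laplacian sign
  have hlap : ∀ z : ℂ, 0 ≤ FXX z + FYY z := by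
    intro z
    rcases lt_or_ge ‖z‖ 1 with hz1 | hz1
    · rw [hFXX0 z hz1, hFYY0 z hz1]; norm_num
    · have hz0 : z ≠ 0 := hne z hz1
      have hN0 : Complex.normSq z ≠ 0 := ne_of_gt (Complex.normSq_pos.mpr hz0)
      have ht0 : 0 ≤ tt z := by rw [← tt_eq]; exact Real.log_nonneg hz1
      have ha2 := hψ'' _ ht0
      have hexp : Real.exp (tt z) = ‖z‖ := by
        rw [← tt_eq]; exact Real.exp_log (norm_pos_iff.mpr hz0)
      have hNx : Complex.normSq z = z.re*z.re + z.im*z.im := Complex.normSq_apply z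
      have hNx0 : z.re*z.re + z.im*z.im ≠ 0 := hNx ▸ hN0
      have key : FXX z + FYY z = (deriv (deriv ψ) (tt z)
          - z.re * (2*deriv φ (tt z) + deriv (deriv φ) (tt z))) / Complex.normSq z := by
        rw [hFXX, hFYY]
        simp only
        field_simp
        rw [hNx]
        ring
      rw [key]
      apply div_nonneg _ (Complex.normSq_nonneg z)
      rw [ha2, hexp]
      have h1 : |z.re| ≤ ‖z‖ := by
        exact Complex.abs_re_le_norm z
      have habs : |2*deriv φ (tt z) + deriv (deriv φ) (tt z)| ≤
          2*|deriv φ (tt z)| + |deriv (deriv φ) (tt z)| := by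
        refine (abs_add_le _ _).trans ?_
        rw [abs_mul]
        norm_num
      have h2 : z.re * (2*deriv φ (tt z) + deriv (deriv φ) (tt z)) ≤
          |z.re| * (2*|deriv φ (tt z)| + |deriv (deriv φ) (tt z)|) := by
        calc z.re * (2*deriv φ (tt z) + deriv (deriv φ) (tt z))
            ≤ |z.re * (2*deriv φ (tt z) + deriv (deriv φ) (tt z))| := le_abs_self _
          _ = |z.re| * |2*deriv φ (tt z) + deriv (deriv φ) (tt z)| := abs_mul _ _
          _ ≤ _ := mul_le_mul_of_nonneg_left habs (abs_nonneg _)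
      nlinarith [h1, h2, abs_nonneg z.re, abs_nonneg (deriv φ (tt z)),
        abs_nonneg (deriv (deriv φ) (tt z)), norm_nonneg z]
  exact subharmonic_of_partials h FX FY FXX FXY FXY FYY hf hfx hfy cfx cfy cfxx cfxy cfxy cfyy hlap

end
end
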